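/- Let F be a field and P ∈ F[X₁,…,Xₙ] a polynomial that is not identically zero on {0,1}ⁿ. Let w = min{wt(u) : u ∈ {0,1}ⁿ, P(u) ≠ 0} and W = max{wt(u) : u ∈ {0,1}ⁿ, P(u) ≠ 0}. Then deg(P) ≥ max{w, n − W}. -/
import Mathlib

/-- The weight of a point of the hypercube: the number of coordinates equal to 1. -/
noncomputable def wt {F : Type*} [Field F] {n : ℕ} (u : Fin n → F) : ℕ :=
  Nat.card {i : Fin n // u i = 1}

open Finset MvPolynomial
open scoped Classical

/-- Key alternating-sum lemma: if `deg P < |A|` and `base` vanishes on `A`, the alternating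
sum of evaluations of `P` over the subcube obtained by switching coordinates in `A` to 1
vanishes. -/
lemma key_alt_sum {F : Type*} [Field F] {n : ℕ} (P : MvPolynomial (Fin n) F)
    (A : Finset (Fin n)) (base : Fin n → F) (hb : ∀ i ∈ A, base i = 0)
    (h : P.totalDegree < A.card) :
    ∑ T ∈ A.powerset, (-1 : F) ^ T.card *
      MvPolynomial.eval (fun i => if i ∈ T then 1 else base i) P = 0 := by
  have hrw : ∀ T ∈ A.powerset,
      (-1 : F) ^ T.card * MvPolynomial.eval (fun i => if i ∈ T then 1 else base i) P
      = ∑ d ∈ P.support, P.coeff d *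
          (((∏ i ∈ T, (-1 : F)) * ∏ i ∈ A \ T, (0 : F) ^ d i) * ∏ i ∈ Aᶜ, base i ^ d i) := by
    intro T hT
    rw [Finset.mem_powerset] at hT
    rw [eval_eq', Finset.mul_sum]
    refine Finset.sum_congr rfl fun d _ => ?_
    have hprod : (∏ i, (if i ∈ T then (1 : F) else base i) ^ d i)
        = (∏ i ∈ A \ T, (0 : F) ^ d i) * ∏ i ∈ Aᶜ, base i ^ d i := by
      rw [← Finset.prod_mul_prod_compl A (fun i => (if i ∈ T then (1 : F) else base i) ^ d i)]
      congr 1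
      · rw [← Finset.prod_subset (Finset.sdiff_subset : A \ T ⊆ A)
          (fun i hiA hi => by
            have hiT : i ∈ T := by
              by_contra hiT
              exact hi (Finset.mem_sdiff.mpr ⟨hiA, hiT⟩)
            simp [hiT])]
        refine Finset.prod_congr rfl fun i hi => ?_
        obtain ⟨hiA, hiT⟩ := Finset.mem_sdiff.mp hi
        rw [if_neg hiT, hb i hiA]
      · refine Finset.prod_congr rfl fun i hi => ?_
        rw [if_neg fun hiT => (Finset.mem_compl.mp hi) (hT hiT)]
    rw [hprod]
    have : (-1 : F) ^ T.card = ∏ _i ∈ T, (-1 : F) := by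
      rw [Finset.prod_const]
    rw [this]; ring
  rw [Finset.sum_congr rfl hrw, Finset.sum_comm]
  refine Finset.sum_eq_zero fun d hd => ?_
  -- there is j ∈ A with d j = 0
  have hj : ∃ j ∈ A, d j = 0 := by
    by_contra hc
    push_neg at hc
    have hsub : A ⊆ d.support := fun i hi => Finsupp.mem_support_iff.mpr (hc i hi)
    have h1 : A.card ≤ d.support.card := Finset.card_le_card hsub
    have h2 : d.support.card ≤ d.sum fun _ e => e := by
      rw [Finset.card_eq_sum_ones, Finsupp.sum]
      exact Finset.sum_le_sum fun i hi => Nat.one_le_iff_ne_zero.mpr (Finsupp.mem_support_iff.mp hi)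
    have h3 := MvPolynomial.le_totalDegree hd
    omega
  obtain ⟨j, hjA, hjd⟩ := hj
  have : ∑ T ∈ A.powerset, P.coeff d *
      (((∏ i ∈ T, (-1 : F)) * ∏ i ∈ A \ T, (0 : F) ^ d i) * ∏ i ∈ Aᶜ, base i ^ d i)
      = P.coeff d * ((∏ i ∈ A, ((-1 : F) + (0 : F) ^ d i)) * ∏ i ∈ Aᶜ, base i ^ d i) := by
    rw [Finset.prod_add, Finset.sum_mul, Finset.mul_sum]
  rw [this]
  have : (∏ i ∈ A, ((-1 : F) + (0 : F) ^ d i)) = 0 :=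
    Finset.prod_eq_zero hjA (by rw [hjd, pow_zero]; ring)
  rw [this]; ring

/-- wt of a hypercube point equals the cardinality of the filter of ones. -/
lemma wt_eq_card {F : Type*} [Field F] {n : ℕ} (u : Fin n → F) :
    wt u = (Finset.univ.filter (fun i => u i = 1)).card := by
  rw [wt, Nat.card_eq_fintype_card, Fintype.card_subtype]

theorem main_result {F : Type*} [Field F] {n w W : ℕ}
    (P : MvPolynomial (Fin n) F)
    (hw : IsLeast {m : ℕ | ∃ u : Fin n → F, (∀ i, u i = 0 ∨ u i = 1) ∧
      MvPolynomial.eval u P ≠ 0 ∧ wt u = m} w)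
    (hW : IsGreatest {m : ℕ | ∃ u : Fin n → F, (∀ i, u i = 0 ∨ u i = 1) ∧
      MvPolynomial.eval u P ≠ 0 ∧ wt u = m} W) :
    max w (n - W) ≤ P.totalDegree := by
  have one_ne_zero' : (1 : F) ≠ 0 := one_ne_zero
  refine max_le ?_ ?_
  · -- w ≤ deg P
    obtain ⟨u, hu01, huP, huw⟩ := hw.1
    by_contra hlt
    push_neg at hlt
    set A : Finset (Fin n) := Finset.univ.filter (fun i => u i = 1) with hA
    have hAcard : A.card = w := by rw [← huw, wt_eq_card]
    have hkey := key_alt_sum P A (fun _ => 0) (fun _ _ => rfl) (by omega)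
    have hsingle : ∑ T ∈ A.powerset, (-1 : F) ^ T.card *
        MvPolynomial.eval (fun i => if i ∈ T then 1 else (0:F)) P
        = (-1 : F) ^ A.card * MvPolynomial.eval u P := by
      rw [Finset.sum_eq_single A]
      · have hfun : (fun i => if i ∈ A then (1:F) else (fun _ => (0:F)) i) = u := by
          funext i
          rcases hu01 i with h0 | h1
          · rw [if_neg, h0]
            simp only [hA, Finset.mem_filter, Finset.mem_univ, true_and, h0]
            exact fun h' => one_ne_zero' (h'.symm)
          · rw [if_pos, h1]
            simp [hA, h1]
        rw [hfun]
      · intro T hT hTne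
        rw [Finset.mem_powerset] at hT
        have hcube : ∀ i, (if i ∈ T then (1:F) else 0) = 0 ∨ (if i ∈ T then (1:F) else 0) = 1 := by
          intro i; by_cases hi : i ∈ T <;> simp [hi]
        have hwt : wt (fun i => if i ∈ T then (1:F) else 0) = T.card := by
          rw [wt_eq_card]
          congr 1
          ext i
          by_cases hi : i ∈ T <;> simp [hi, one_ne_zero']
        have hTlt : T.card < w := by
          rw [← hAcard]
          exact Finset.card_lt_card (lt_of_le_of_ne hT hTne)
        by_contra hne
        have hev : MvPolynomial.eval (fun i => if i ∈ T then (1:F) else 0) P ≠ 0 := by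
          intro h0; exact hne (by rw [h0, mul_zero])
        have := hw.2 ⟨_, hcube, hev, hwt⟩
        omega
      · intro hA'
        exact absurd (Finset.mem_powerset.mpr le_rfl) hA'
    rw [hsingle] at hkey
    rcases mul_eq_zero.mp hkey with h | h
    · exact pow_ne_zero _ (neg_ne_zero.mpr one_ne_zero') h
    · exact huP h
  · -- n - W ≤ deg P
    obtain ⟨u, hu01, huP, huW⟩ := hW.1
    by_contra hlt
    push_neg at hlt
    set B : Finset (Fin n) := Finset.univ.filter (fun i => u i = 0) with hB
    have hBcard : B.card = n - W := by
      have h1 : (Finset.univ.filter (fun i => u i = 1)).card = W := by rw [← huW, wt_eq_card]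
      have hfe : Finset.univ.filter (fun i => u i = 1)
          = Finset.univ.filter (fun i => ¬ u i = 0) := by
        ext i
        simp only [Finset.mem_filter, Finset.mem_univ, true_and]
        rcases hu01 i with h | h <;> simp [h, one_ne_zero', zero_ne_one]
      have h2 : B.card + (Finset.univ.filter (fun i => u i = 1)).card = n := by
        rw [hB, hfe, Finset.card_filter_add_card_filter_not, Finset.card_univ,
          Fintype.card_fin]
      omega
    have hb : ∀ i ∈ B, u i = 0 := by
      intro i hi; exact (Finset.mem_filter.mp hi).2
    have hkey := key_alt_sum P B u hb (by omega)
    have hsingle : ∑ T ∈ B.powerset, (-1 : F) ^ T.card *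
        MvPolynomial.eval (fun i => if i ∈ T then 1 else u i) P
        = MvPolynomial.eval u P := by
      rw [Finset.sum_eq_single ∅]
      · simp
      · intro T hT hTne
        rw [Finset.mem_powerset] at hT
        have hcube : ∀ i, (if i ∈ T then (1:F) else u i) = 0 ∨ (if i ∈ T then (1:F) else u i) = 1 := by
          intro i
          by_cases hi : i ∈ T
          · simp [hi]
          · simpa [hi] using hu01 i
        have hwt : wt (fun i => if i ∈ T then (1:F) else u i)
            = (Finset.univ.filter (fun i => u i = 1)).card + T.card := by
          rw [wt_eq_card]
          have hunion : (Finset.univ.filter (fun i => (if i ∈ T then (1:F) else u i) = 1))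
              = Finset.univ.filter (fun i => u i = 1) ∪ T := by
            ext i
            by_cases hi : i ∈ T
            · simp [hi]
            · simp [hi]
          rw [hunion, Finset.card_union_of_disjoint]
          rw [Finset.disjoint_left]
          intro i hi hiT
          have := hb i (hT hiT)
          have h1 : u i = 1 := (Finset.mem_filter.mp hi).2
          rw [this] at h1
          exact one_ne_zero' h1.symm
        have h1 : (Finset.univ.filter (fun i => u i = 1)).card = W := by rw [← huW, wt_eq_card]
        have hTpos : 0 < T.card := Finset.card_pos.mpr (Finset.nonempty_of_ne_empty hTne)
        by_contra hne
        have hev : MvPolynomial.eval (fun i => if i ∈ T then (1:F) else u i) P ≠ 0 := by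
          intro h0; exact hne (by rw [h0, mul_zero])
        have := hW.2 ⟨_, hcube, hev, hwt⟩
        omega
      · intro h'
        exact absurd (Finset.mem_powerset.mpr (Finset.empty_subset _)) h'
    rw [hsingle] at hkey
    exact huP hkey
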